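/- arXiv:2107.06216 — 4 statements merged into one kernel-verified Lean document; each statement's English description precedes it below -/
import Mathlib

section
/- Let s_1 ≥ s_2 ≥ ⋯ ≥ s_m ≥ 0 be real machine speeds, set S_k := s_1 + ⋯ + s_{min(k,m)}, and let L_1, …, L_n ≥ 0 be processing rates for n tasks such that for every subset V of tasks, ∑_{v ∈ V} L_v ≤ S_{|V|}. Then there exists a fractional assignment x : {1,…,n} × {1,…,m} → [0,∞) such that ∑_{i=1}^m x_{v,i} ≤ 1 for every task v, ∑_{v=1}^n x_{v,i} ≤ 1 for every machine i, and ∑_{i=1}^m x_{v,i}·s_i ≥ L_v for every task v. -/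
open Finset

private lemma sched_core (M : ℕ) :
    ∀ (n : ℕ) (t y : ℕ → ℝ),
      (∀ i, 0 ≤ t i) → (∀ i, t (i+1) ≤ t i) → (∀ i, M ≤ i → t i = 0) →
      (∀ v, 0 ≤ y v) → (∀ v, y (v+1) ≤ y v) → (∀ v, n ≤ v → y v = 0) →
      (∀ k, ∑ v ∈ range k, y v ≤ ∑ i ∈ range k, t i) →
      ∃ x : ℕ → ℕ → ℝ,
        (∀ v i, 0 ≤ x v i) ∧ (∀ v, ∑ i ∈ range M, x v i ≤ 1) ∧
        (∀ i, ∑ v ∈ range n, x v i ≤ 1) ∧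
        (∀ v, y v ≤ ∑ i ∈ range M, x v i * t i) := by
  intro n
  induction n with
  | zero =>
    intro t y ht0 hta htM hy0 hya hyn hpre
    refine ⟨fun _ _ => 0, fun _ _ => le_refl 0, by simp, by simp, fun v => by
      simp [hyn v (Nat.zero_le v)]⟩
  | succ n ih =>
    intro t y ht0 hta htM hy0 hya hyn hpre
    have hta' : Antitone t := antitone_nat_of_succ_le hta
    have hya' : Antitone y := antitone_nat_of_succ_le hya
    by_cases hy : y 0 ≤ 0
    · refine ⟨fun _ _ => 0, fun _ _ => le_refl 0, by simp, by simp, fun v => by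
        have h1 : y v ≤ y 0 := hya' (Nat.zero_le v)
        simp only [zero_mul, Finset.sum_const_zero]
        linarith⟩
    push_neg at hy
    have h00 : y 0 ≤ t 0 := by have := hpre 1; simpa using this
    set j := Nat.findGreatest (fun i => y 0 ≤ t i) M with hjdef
    have hjP : y 0 ≤ t j := by
      have h := Nat.findGreatest_spec (P := fun i => y 0 ≤ t i) (Nat.zero_le M) h00
      simpa [← hjdef] using h
    have hjM : j < M := by
      by_contra h
      push_neg at h
      have := htM j h
      linarith
    have hj1 : t (j+1) < y 0 := by
      by_contra h
      push_neg at h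
      have h2 := Nat.findGreatest_is_greatest (P := fun i => y 0 ≤ t i)
        (k := j + 1) (by omega : Nat.findGreatest (fun i => y 0 ≤ t i) M < j + 1) hjM
      exact h2 h
    have hd : t (j+1) < t j := lt_of_lt_of_le hj1 hjP
    obtain ⟨α, hαdef⟩ : ∃ a : ℝ, a = (y 0 - t (j+1)) / (t j - t (j+1)) := ⟨_, rfl⟩
    have hα0 : 0 < α := by rw [hαdef]; exact div_pos (by linarith) (by linarith)
    have hα1 : α ≤ 1 := by
      rw [hαdef, div_le_one (by linarith)]; linarith
    have hkey : α * t j + (1 - α) * t (j+1) = y 0 := by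
      have hne : t j - t (j+1) ≠ 0 := by linarith
      have h2 : α * (t j - t (j+1)) = y 0 - t (j+1) := by
        rw [hαdef]; exact div_mul_cancel₀ _ hne
      linear_combination h2
    obtain ⟨u, hudef⟩ : ∃ z : ℝ, z = t j + t (j+1) - y 0 := ⟨_, rfl⟩
    have hu1 : u = (1 - α) * t j + α * t (j+1) := by linear_combination hudef + hkey
    have hut1 : t (j+1) ≤ u := by rw [hudef]; linarith
    have hutj : u ≤ t j := by rw [hudef]; linarith
    have hu0 : 0 ≤ u := le_trans (ht0 _) hut1
    set t' : ℕ → ℝ := fun i => if i < j then t i else if i = j then u else t (i+1)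
      with ht'def
    have ht'lt : ∀ i, i < j → t' i = t i := by
      intro i h; simp only [ht'def]; rw [if_pos h]
    have ht'j : t' j = u := by
      simp [ht'def]
    have ht'gt : ∀ i, j < i → t' i = t (i+1) := by
      intro i h; simp only [ht'def]
      rw [if_neg (by omega), if_neg (by omega)]
    have ht'0 : ∀ i, 0 ≤ t' i := by
      intro i
      rcases lt_trichotomy i j with h | h | h
      · rw [ht'lt i h]; exact ht0 i
      · rw [h, ht'j]; exact hu0
      · rw [ht'gt i h]; exact ht0 (i+1)
    have ht'a : ∀ i, t' (i+1) ≤ t' i := by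
      intro i
      rcases lt_trichotomy (i+1) j with h | h | h
      · rw [ht'lt (i+1) h, ht'lt i (by omega)]; exact hta i
      · rw [h, ht'j, ht'lt i (by omega)]
        calc u ≤ t j := hutj
          _ ≤ t i := hta' (by omega)
      · by_cases hij : i = j
        · rw [ht'gt (i+1) (by omega), hij, ht'j]
          calc t (j+1+1) ≤ t (j+1) := hta _
            _ ≤ u := hut1
        · rw [ht'gt (i+1) h, ht'gt i (by omega)]
          exact hta (i+1)
    have ht'M : ∀ i, M ≤ i → t' i = 0 := by
      intro i hi
      rw [ht'gt i (by omega)]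
      exact htM (i+1) (by omega)
    have hlt' : ∀ k, k ≤ j → ∑ i ∈ range k, t' i = ∑ i ∈ range k, t i := by
      intro k hk
      refine Finset.sum_congr rfl (fun i hi => ?_)
      rw [Finset.mem_range] at hi
      exact ht'lt i (by omega)
    have hgt' : ∀ k, j < k → ∑ i ∈ range k, t' i = ∑ i ∈ range (k+1), t i - y 0 := by
      intro k hk
      induction k with
      | zero => omega
      | succ k ihk =>
        by_cases hkj : k = j
        · rw [hkj, Finset.sum_range_succ, hlt' j le_rfl, ht'j,
            Finset.sum_range_succ, Finset.sum_range_succ, hudef]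
          ring
        · have hk' : j < k := by omega
          rw [Finset.sum_range_succ, ihk hk', ht'gt k hk',
            Finset.sum_range_succ t (k+1)]
          ring
    set y' : ℕ → ℝ := fun v => y (v+1) with hy'def
    have hpre' : ∀ k, ∑ v ∈ range k, y' v ≤ ∑ i ∈ range k, t' i := by
      intro k
      by_cases hk : k ≤ j
      · rw [hlt' k hk]
        refine Finset.sum_le_sum (fun i hi => ?_)
        rw [Finset.mem_range] at hi
        calc y' i ≤ y 0 := hya' (Nat.zero_le _)
          _ ≤ t j := hjP
          _ ≤ t i := hta' (by omega)
      · push_neg at hk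
        rw [hgt' k hk]
        have h1 := hpre (k+1)
        rw [Finset.sum_range_succ' y k] at h1
        simp only [hy'def]
        linarith
    obtain ⟨x', hx0, hxr, hxc, hxw⟩ := ih t' y' ht'0 ht'a ht'M (fun v => hy0 _)
      (fun v => hya _) (fun v hv => hyn _ (by omega)) hpre'
    -- decomposition helpers
    have hjmem : j ∈ range M := Finset.mem_range.mpr hjM
    have hfil1 : (range M).filter (fun i => i < j) = range j := by
      ext i
      simp only [Finset.mem_filter, Finset.mem_range]
      omega
    have hfil2 : (range M).filter (fun i => j + 1 < i) = Finset.Ico (j+2) M := by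
      ext i
      simp only [Finset.mem_filter, Finset.mem_range, Finset.mem_Ico]
      omega
    have hsum1 : ∀ f : ℕ → ℝ,
        ∑ i ∈ range M, (if i < j then f i else 0) = ∑ i ∈ range j, f i := by
      intro f; rw [← Finset.sum_filter, hfil1]
    have hsum2 : ∀ f : ℕ → ℝ,
        ∑ i ∈ range M, (if i = j then f i else 0) = f j := by
      intro f; rw [Finset.sum_ite_eq' (range M) j f, if_pos hjmem]
    have hsum3 : ∀ f : ℕ → ℝ,
        ∑ i ∈ range M, (if i = j + 1 then f i else 0)
          = if j + 1 < M then f (j+1) else 0 := by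
      intro f; rw [Finset.sum_ite_eq' (range M) (j+1) f]
      simp [Finset.mem_range]
    have hsum4 : ∀ f : ℕ → ℝ,
        ∑ i ∈ range M, (if j + 1 < i then f i else 0)
          = ∑ i ∈ Finset.Ico (j+1) (M-1), f (i+1) := by
      intro f
      rw [← Finset.sum_filter, hfil2, Finset.sum_Ico_eq_sum_range,
        Finset.sum_Ico_eq_sum_range]
      have h5 : M - (j+2) = M - 1 - (j+1) := by omega
      rw [h5]
      refine Finset.sum_congr rfl (fun l _ => ?_)
      congr 1
      omega
    have hsplit : ∀ f : ℕ → ℝ,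
        ∑ i ∈ range M, f i
          = ∑ i ∈ range j, f i + f j + ∑ i ∈ Finset.Ico (j+1) M, f i := by
      intro f
      rw [Finset.range_eq_Ico,
        ← Finset.sum_Ico_consecutive f (Nat.zero_le (j+1)) hjM,
        ← Finset.range_eq_Ico, Finset.sum_range_succ]
    have htail : ∀ f : ℕ → ℝ,
        ∑ i ∈ Finset.Ico (j+1) M, f i * t (i+1)
          = ∑ i ∈ Finset.Ico (j+1) (M-1), f i * t (i+1) := by
      intro f
      by_cases h : j + 1 < M
      · have hins : Finset.Ico (j+1) M = insert (M-1) (Finset.Ico (j+1) (M-1)) := by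
          ext i
          simp only [Finset.mem_Ico, Finset.mem_insert]
          omega
        rw [hins, Finset.sum_insert (by simp [Finset.mem_Ico])]
        have hM0 : t (M - 1 + 1) = 0 := htM _ (by omega)
        rw [hM0]
        ring
      · rw [Finset.Ico_eq_empty (by omega), Finset.Ico_eq_empty (by omega)]
    set A : ℕ → ℝ := fun i =>
      (if i = j then α else 0) + (if i = j + 1 then 1 - α else 0) with hA
    set B : ℕ → ℕ → ℝ := fun v i =>
      (if i < j then x' v i else 0) + (if i = j then (1 - α) * x' v j else 0)
        + (if i = j + 1 then α * x' v j else 0)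
        + (if j + 1 < i then x' v (i-1) else 0) with hB
    refine ⟨fun v => Nat.casesOn v A B, ?_, ?_, ?_, ?_⟩
    · -- nonnegativity
      intro v i
      cases v with
      | zero =>
        show 0 ≤ A i
        simp only [hA]
        split_ifs <;> linarith
      | succ w =>
        show 0 ≤ B w i
        simp only [hB]
        have h1 := hx0 w i
        have h2 := hx0 w j
        have h3 := hx0 w (i-1)
        have p1 : 0 ≤ (1 - α) * x' w j := mul_nonneg (by linarith) h2
        have p2 : 0 ≤ α * x' w j := mul_nonneg hα0.le h2
        split_ifs <;> linarith
    · -- row sums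
      intro v
      cases v with
      | zero =>
        show ∑ i ∈ range M, A i ≤ 1
        simp only [hA]
        rw [Finset.sum_add_distrib, hsum2 (fun _ => α), hsum3 (fun _ => 1 - α)]
        split_ifs <;> linarith
      | succ w =>
        show ∑ i ∈ range M, B w i ≤ 1
        simp only [hB]
        rw [Finset.sum_add_distrib, Finset.sum_add_distrib, Finset.sum_add_distrib,
          hsum1, hsum2 (fun _ => (1 - α) * x' w j),
          hsum3 (fun _ => α * x' w j), hsum4 (fun i => x' w (i-1))]
        have e1 : ∑ i ∈ Finset.Ico (j+1) (M-1), x' w (i+1-1)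
            = ∑ i ∈ Finset.Ico (j+1) (M-1), x' w i := by
          refine Finset.sum_congr rfl (fun i _ => ?_)
          simp
        rw [e1]
        have e2 : ∑ i ∈ Finset.Ico (j+1) (M-1), x' w i
            ≤ ∑ i ∈ Finset.Ico (j+1) M, x' w i :=
          Finset.sum_le_sum_of_subset_of_nonneg
            (Finset.Ico_subset_Ico le_rfl (by omega))
            (fun i _ _ => hx0 _ _)
        have e3 : (if j + 1 < M then α * x' w j else 0) ≤ α * x' w j := by
          split_ifs with h'
          · exact le_refl _
          · exact mul_nonneg hα0.le (hx0 w j)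
        have e4 := hxr w
        rw [hsplit (fun i => x' w i)] at e4
        linarith
    · -- column sums
      intro i
      rw [Finset.sum_range_succ']
      show ∑ v ∈ range n, B v i + A i ≤ 1
      by_cases h1 : i < j
      · have e1 : A i = 0 := by
          simp only [hA]
          rw [if_neg (by omega : ¬ i = j), if_neg (by omega : ¬ i = j + 1)]
          ring
        have e2 : ∀ v, B v i = x' v i := by
          intro v
          simp only [hB]
          rw [if_pos h1, if_neg (by omega : ¬ i = j),
            if_neg (by omega : ¬ i = j + 1), if_neg (by omega : ¬ j + 1 < i)]
          ring
        rw [e1, Finset.sum_congr rfl (fun v _ => e2 v), add_zero]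
        exact hxc i
      · by_cases h2 : i = j
        · have e1 : A i = α := by
            simp only [hA]
            rw [if_pos h2, if_neg (by omega : ¬ i = j + 1)]
            ring
          have e2 : ∀ v, B v i = (1 - α) * x' v j := by
            intro v
            simp only [hB]
            rw [if_neg (by omega : ¬ i < j), if_pos h2,
              if_neg (by omega : ¬ i = j + 1), if_neg (by omega : ¬ j + 1 < i)]
            ring
          rw [e1, Finset.sum_congr rfl (fun v _ => e2 v), ← Finset.mul_sum]
          have h3 := hxc j
          nlinarith
        · by_cases h3 : i = j + 1
          · have e1 : A i = 1 - α := by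
              simp only [hA]
              rw [if_neg h2, if_pos h3]
              ring
            have e2 : ∀ v, B v i = α * x' v j := by
              intro v
              simp only [hB]
              rw [if_neg (by omega : ¬ i < j), if_neg h2,
                if_pos h3, if_neg (by omega : ¬ j + 1 < i)]
              ring
            rw [e1, Finset.sum_congr rfl (fun v _ => e2 v), ← Finset.mul_sum]
            have h4 := hxc j
            nlinarith
          · have h4 : j + 1 < i := by omega
            have e1 : A i = 0 := by
              simp only [hA]
              rw [if_neg h2, if_neg h3]
              ring
            have e2 : ∀ v, B v i = x' v (i-1) := by
              intro v
              simp only [hB]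
              rw [if_neg h1, if_neg h2, if_neg h3, if_pos h4]
              ring
            rw [e1, Finset.sum_congr rfl (fun v _ => e2 v), add_zero]
            exact hxc (i-1)
    · -- processing
      intro v
      cases v with
      | zero =>
        show y 0 ≤ ∑ i ∈ range M, A i * t i
        have expand : ∀ i, A i * t i
            = (if i = j then α * t i else 0) + (if i = j + 1 then (1 - α) * t i else 0) := by
          intro i
          simp only [hA]
          split_ifs <;> ring
        rw [Finset.sum_congr rfl (fun i _ => expand i), Finset.sum_add_distrib,
          hsum2 (fun i => α * t i), hsum3 (fun i => (1 - α) * t i)]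
        have e3 : (if j + 1 < M then (1 - α) * t (j+1) else 0) = (1 - α) * t (j+1) := by
          split_ifs with h'
          · rfl
          · rw [htM (j+1) (by omega)]; ring
        rw [e3, hkey]
      | succ w =>
        show y (w+1) ≤ ∑ i ∈ range M, B w i * t i
        have expand : ∀ i, B w i * t i
            = (if i < j then x' w i * t i else 0)
              + (if i = j then (1 - α) * x' w j * t i else 0)
              + (if i = j + 1 then α * x' w j * t i else 0)
              + (if j + 1 < i then x' w (i-1) * t i else 0) := by
          intro i
          simp only [hB]
          split_ifs <;> ring
        rw [Finset.sum_congr rfl (fun i _ => expand i), Finset.sum_add_distrib,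
          Finset.sum_add_distrib, Finset.sum_add_distrib, hsum1,
          hsum2 (fun i => (1 - α) * x' w j * t i),
          hsum3 (fun i => α * x' w j * t i),
          hsum4 (fun i => x' w (i-1) * t i)]
        have key : ∑ i ∈ range j, x' w i * t i
            + (1 - α) * x' w j * t j
            + (if j + 1 < M then α * x' w j * t (j+1) else 0)
            + ∑ i ∈ Finset.Ico (j+1) (M-1), x' w (i+1-1) * t (i+1)
            = ∑ i ∈ range M, x' w i * t' i := by
          rw [hsplit (fun i => x' w i * t' i)]
          have p1 : ∑ i ∈ range j, x' w i * t i
              = ∑ i ∈ range j, x' w i * t' i := by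
            refine Finset.sum_congr rfl (fun i hi => ?_)
            rw [Finset.mem_range] at hi
            rw [ht'lt i hi]
          have p2 : (if j + 1 < M then α * x' w j * t (j+1) else 0)
              = α * x' w j * t (j+1) := by
            split_ifs with h'
            · rfl
            · rw [htM (j+1) (by omega)]; ring
          have p4 : ∑ i ∈ Finset.Ico (j+1) (M-1), x' w (i+1-1) * t (i+1)
              = ∑ i ∈ Finset.Ico (j+1) M, x' w i * t' i := by
            have q1 : ∑ i ∈ Finset.Ico (j+1) M, x' w i * t' i
                = ∑ i ∈ Finset.Ico (j+1) M, x' w i * t (i+1) := by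
              refine Finset.sum_congr rfl (fun i hi => ?_)
              rw [Finset.mem_Ico] at hi
              rw [ht'gt i (by omega)]
            rw [q1, htail (fun i => x' w i)]
            refine Finset.sum_congr rfl (fun i _ => ?_)
            simp
          rw [p1, p2, p4, ht'j, hu1]
          ring
        rw [key]
        have h5 := hxw w
        simp only [hy'def] at h5
        exact h5


/-- **Fractional schedule feasibility.** If machine speeds `s 0 ≥ s 1 ≥ ⋯ ≥ s (m-1) ≥ 0`
and task rates `L v ≥ 0` satisfy that the total rate of any subset `V` of tasks is at most
`S (V.card)` (the total speed of the `|V|` fastest machines), then there is a fractional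
assignment `x` with row sums and column sums at most `1` giving each task `v` processing
`∑ i, x v i * s i ≥ L v`. -/
theorem stmt_0 (m n : ℕ) (s : Fin m → ℝ)
    (hs_nonneg : ∀ i, 0 ≤ s i)
    (hs_mono : ∀ i j : Fin m, i ≤ j → s j ≤ s i)
    (L : Fin n → ℝ) (hL : ∀ v, 0 ≤ L v)
    (hfeas : ∀ V : Finset (Fin n),
      ∑ v ∈ V, L v ≤ ∑ i ∈ Finset.univ.filter (fun i : Fin m => (i : ℕ) < V.card), s i) :
    ∃ x : Fin n → Fin m → ℝ,
      (∀ v i, 0 ≤ x v i) ∧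
      (∀ v, ∑ i, x v i ≤ 1) ∧
      (∀ i, ∑ v, x v i ≤ 1) ∧
      (∀ v, L v ≤ ∑ i, x v i * s i) := by
  classical
  set σ : Equiv.Perm (Fin n) := Tuple.sort (fun v => -L v) with hσ
  have hsort : Monotone ((fun v => -L v) ∘ σ) := Tuple.monotone_sort (fun v => -L v)
  have hLsort : ∀ a b : Fin n, a ≤ b → L (σ b) ≤ L (σ a) := by
    intro a b hab
    have := hsort hab
    simp only [Function.comp_apply] at this
    linarith
  set t : ℕ → ℝ := fun i => if h : i < m then s ⟨i, h⟩ else 0 with ht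
  set y : ℕ → ℝ := fun v => if h : v < n then L (σ ⟨v, h⟩) else 0 with hy
  have ht0 : ∀ i, 0 ≤ t i := by
    intro i; simp only [ht]
    split_ifs with h
    · exact hs_nonneg _
    · exact le_refl 0
  have hy0 : ∀ v, 0 ≤ y v := by
    intro v; simp only [hy]
    split_ifs with h
    · exact hL _
    · exact le_refl 0
  have hta : ∀ i, t (i+1) ≤ t i := by
    intro i; simp only [ht]
    split_ifs with h1 h2 h2
    · exact hs_mono ⟨i, by omega⟩ ⟨i+1, h1⟩ (Fin.mk_le_mk.mpr (by omega))
    · omega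
    · exact hs_nonneg _
    · exact le_refl 0
  have hya : ∀ v, y (v+1) ≤ y v := by
    intro v; simp only [hy]
    split_ifs with h1 h2 h2
    · exact hLsort ⟨v, by omega⟩ ⟨v+1, h1⟩ (Fin.mk_le_mk.mpr (by omega))
    · omega
    · exact hL _
    · exact le_refl 0
  have htM : ∀ i, m ≤ i → t i = 0 := by
    intro i hi; simp only [ht]
    rw [dif_neg (by omega)]
  have hyn : ∀ v, n ≤ v → y v = 0 := by
    intro v hv; simp only [hy]
    rw [dif_neg (by omega)]
  -- conversion between filtered Fin sums and range sums of t
  have htrs : ∀ k : ℕ,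
      ∑ i ∈ Finset.range k, t i
        = ∑ i ∈ Finset.univ.filter (fun i : Fin m => (i : ℕ) < k), s i := by
    intro k
    have e1 : ∑ i ∈ Finset.univ.filter (fun i : Fin m => (i : ℕ) < k), s i
        = ∑ i : Fin m, (if (i : ℕ) < k then t i else 0) := by
      rw [Finset.sum_filter]
      refine Finset.sum_congr rfl (fun i _ => ?_)
      split_ifs with h
      · simp only [ht]
        rw [dif_pos i.isLt]
      · rfl
    rw [e1, Fin.sum_univ_eq_sum_range (fun i => if i < k then t i else 0) m]
    have e2 : ∑ i ∈ Finset.range k, t i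
        = ∑ i ∈ Finset.range (max k m), (if i < k then t i else 0) := by
      rw [← Finset.sum_subset (Finset.range_subset_range.mpr (le_max_left k m))
        (fun i _ hi => ?_)]
      · refine Finset.sum_congr rfl (fun i hi => ?_)
        rw [Finset.mem_range] at hi
        rw [if_pos hi]
      · rw [Finset.mem_range] at hi
        rw [if_neg hi]
    have e3 : ∑ i ∈ Finset.range m, (if i < k then t i else 0)
        = ∑ i ∈ Finset.range (max k m), (if i < k then t i else 0) := by
      refine Finset.sum_subset (Finset.range_subset_range.mpr (le_max_right k m))
        (fun i _ hi => ?_)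
      rw [Finset.mem_range] at hi
      split_ifs with h
      · exact htM i (by omega)
      · rfl
    rw [e2, ← e3]
  have hpre_le : ∀ k, k ≤ n → ∑ v ∈ Finset.range k, y v ≤ ∑ i ∈ Finset.range k, t i := by
    intro k hk
    set V : Finset (Fin n) :=
      Finset.image (fun v : Fin k => σ (Fin.castLE hk v)) Finset.univ with hV
    have hinj : Function.Injective (fun v : Fin k => σ (Fin.castLE hk v)) := by
      intro a b hab
      simp only at hab
      have := σ.injective hab
      exact Fin.castLE_injective hk this
    have hcard : V.card = k := by
      rw [hV, Finset.card_image_of_injective _ hinj, Finset.card_univ,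
        Fintype.card_fin]
    have h1 := hfeas V
    rw [hcard] at h1
    have h2 : ∑ v ∈ V, L v = ∑ v ∈ Finset.range k, y v := by
      rw [hV, Finset.sum_image (fun a _ b _ hab => hinj hab)]
      rw [← Fin.sum_univ_eq_sum_range y k]
      refine Finset.sum_congr rfl (fun v _ => ?_)
      simp only [hy]
      rw [dif_pos (by omega : (v : ℕ) < n)]
      rfl
    rw [htrs k]
    linarith [h1, h2.symm.le]
  have hpre : ∀ k, ∑ v ∈ Finset.range k, y v ≤ ∑ i ∈ Finset.range k, t i := by
    intro k
    by_cases hk : k ≤ n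
    · exact hpre_le k hk
    · push_neg at hk
      have h1 : ∑ v ∈ Finset.range k, y v = ∑ v ∈ Finset.range n, y v := by
        symm
        refine Finset.sum_subset (Finset.range_subset_range.mpr (by omega)) (fun v _ hv => ?_)
        rw [Finset.mem_range] at hv
        exact hyn v (by omega)
      have h2 : ∑ i ∈ Finset.range n, t i ≤ ∑ i ∈ Finset.range k, t i :=
        Finset.sum_le_sum_of_subset_of_nonneg
          (Finset.range_subset_range.mpr (by omega)) (fun i _ _ => ht0 i)
      have h3 := hpre_le n le_rfl
      linarith
  obtain ⟨X, hX0, hXr, hXc, hXw⟩ := sched_core m n t y ht0 hta htM hy0 hya hyn hpre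
  refine ⟨fun v i => X ((σ.symm v : Fin n) : ℕ) (i : ℕ), fun v i => hX0 _ _, ?_, ?_, ?_⟩
  · intro v
    rw [Fin.sum_univ_eq_sum_range (fun i => X ((σ.symm v : Fin n) : ℕ) i) m]
    exact hXr _
  · intro i
    have h1 : ∑ v : Fin n, X ((σ.symm v : Fin n) : ℕ) (i : ℕ)
        = ∑ v : Fin n, X (v : ℕ) (i : ℕ) :=
      Equiv.sum_comp σ.symm (fun v : Fin n => X (v : ℕ) (i : ℕ))
    rw [h1, Fin.sum_univ_eq_sum_range (fun v => X v (i : ℕ)) n]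
    exact hXc _
  · intro v
    have h1 : L v = y ((σ.symm v : Fin n) : ℕ) := by
      simp only [hy]
      rw [dif_pos (σ.symm v).isLt]
      congr 1
      rw [show (⟨((σ.symm v : Fin n) : ℕ), (σ.symm v).isLt⟩ : Fin n) = σ.symm v from
        Fin.eta _ _]
      exact (Equiv.apply_symm_apply σ v).symm
    rw [h1]
    have h2 := hXw ((σ.symm v : Fin n) : ℕ)
    have h3 : ∑ i : Fin m, X ((σ.symm v : Fin n) : ℕ) (i : ℕ) * s i
        = ∑ i ∈ Finset.range m, X ((σ.symm v : Fin n) : ℕ) i * t i := by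
      rw [← Fin.sum_univ_eq_sum_range (fun i => X ((σ.symm v : Fin n) : ℕ) i * t i) m]
      refine Finset.sum_congr rfl (fun i _ => ?_)
      simp only [ht]
      rw [dif_pos i.isLt, Fin.eta]
    rw [h3]
    exact h2
end

section
/- Let s : ℕ → ℝ be a nonincreasing sequence of nonnegative speeds with prefix sums S_k := s_1 + ⋯ + s_k, let γ > 0, and let L : T → [0,∞) assign rates to a finite set T of tasks such that every subset U ⊆ T satisfies ∑_{u ∈ U} L_u ≤ γ·S_{|U|}. Suppose V ⊆ T satisfies ∑_{u ∈ V} L_u = γ·S_{|V|} (V is tight), and suppose v ∈ V and v' ∈ T \ V are tasks with L_v = L_{v'}. Then ∑_{u ∈ V ∪ {v'}} L_u = γ·S_{|V|+1}, i.e., V ∪ {v'} is also tight; in particular L_v = γ·s_{|V|} = γ·s_{|V|+1} = L_{v'}. -/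
/-- **Uniform rates, key step.** Speeds `s 1 ≥ s 2 ≥ ⋯ ≥ 0` with prefix sums
`S k = ∑_{i=1}^k s i`. Rates `L` on a finite task set `T` are feasible:
every `U ⊆ T` has `∑_{u ∈ U} L u ≤ γ * S (U.card)`. If `V ⊆ T` is tight,
`v ∈ V`, `v' ∈ T \ V` and `L v = L v'`, then `V ∪ {v'}` is also tight, and
`L v = γ * s |V| = γ * s (|V|+1) = L v'`. -/
theorem stmt_1 {α : Type*} [DecidableEq α] (s : ℕ → ℝ)
    (hs_nonneg : ∀ k, 0 ≤ s k)
    (hs_anti : ∀ k l : ℕ, k ≤ l → s l ≤ s k)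
    (γ : ℝ) (hγ : 0 < γ)
    (T : Finset α) (L : α → ℝ) (hL : ∀ u ∈ T, 0 ≤ L u)
    (hfeas : ∀ U ⊆ T, ∑ u ∈ U, L u ≤ γ * ∑ i ∈ Finset.Icc 1 U.card, s i)
    (V : Finset α) (hVT : V ⊆ T)
    (htight : ∑ u ∈ V, L u = γ * ∑ i ∈ Finset.Icc 1 V.card, s i)
    (v v' : α) (hv : v ∈ V) (hv'T : v' ∈ T) (hv'V : v' ∉ V)
    (hLeq : L v = L v') :
    (∑ u ∈ insert v' V, L u = γ * ∑ i ∈ Finset.Icc 1 (V.card + 1), s i) ∧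
    L v = γ * s V.card ∧
    γ * s V.card = γ * s (V.card + 1) ∧
    γ * s (V.card + 1) = L v' := by
  obtain ⟨m, hm⟩ : ∃ m, V.card = m + 1 :=
    ⟨V.card - 1, (Nat.succ_pred_eq_of_pos (Finset.card_pos.mpr ⟨v, hv⟩)).symm⟩
  -- prefix sum decompositions
  have hS1 : ∑ i ∈ Finset.Icc 1 (m + 1), s i = (∑ i ∈ Finset.Icc 1 m, s i) + s (m + 1) :=
    Finset.sum_Icc_succ_top (Nat.le_add_left 1 m) s
  have hS2 : ∑ i ∈ Finset.Icc 1 (m + 2), s i = (∑ i ∈ Finset.Icc 1 (m + 1), s i) + s (m + 2) :=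
    Finset.sum_Icc_succ_top (Nat.le_add_left 1 (m + 1)) s
  -- erase v: lower bound on L v
  have herase : (V.erase v) ⊆ T := (Finset.erase_subset v V).trans hVT
  have h1 := hfeas _ herase
  rw [Finset.card_erase_of_mem hv, hm] at h1
  simp only [Nat.add_sub_cancel] at h1
  have hsum_erase : ∑ u ∈ V.erase v, L u + L v = ∑ u ∈ V, L u :=
    Finset.sum_erase_add V L hv
  have hlow : γ * s (m + 1) ≤ L v := by
    rw [hm, hS1] at htight; nlinarith
  -- insert v': upper bound on L v'
  have hins : insert v' V ⊆ T := Finset.insert_subset hv'T hVT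
  have h2 := hfeas _ hins
  rw [Finset.card_insert_of_notMem hv'V, Finset.sum_insert hv'V, hm] at h2
  have hhigh : L v' ≤ γ * s (m + 2) := by
    rw [hS2, htight, hm] at h2; linarith
  have hmono : γ * s (m + 2) ≤ γ * s (m + 1) :=
    mul_le_mul_of_nonneg_left (hs_anti _ _ (by omega)) hγ.le
  have hLv : L v = γ * s (m + 1) := by linarith [hLeq]
  have hLv' : L v' = γ * s (m + 2) := by linarith [hLeq]
  refine ⟨?_, ?_, ?_, ?_⟩
  · rw [Finset.sum_insert hv'V, hm, hS2, htight, hm, hLv']; ring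
  · rw [hm]; exact hLv
  · rw [hm]; linarith
  · rw [hm]; linarith
end

section
/- Under the increasing capacity assumption, let γ ≥ 2K, let ℓ with 1 ≤ ℓ ≤ K and ℓ* with 1 ≤ ℓ* < K be speed classes, and let n > 0 and L > 0 be reals. Suppose either (i) ℓ ≤ ℓ* and L·n ≥ γ·m_{ℓ*}·σ_{ℓ*}, or (ii) ℓ* < ℓ and L·n ≥ γ·(m_1σ_1 + ⋯ + m_{ℓ*}σ_{ℓ*}). Then 1/n ≤ (L/σ_ℓ)·(1/(2K·m_ℓ) + 1/(2K·~m_{ℓ*})). -/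
/-- Threshold `~m ℓ = (σ 1 * m 1 + ⋯ + σ ℓ * m ℓ) / σ (ℓ+1)`. -/
noncomputable def tmDef (σ m : ℕ → ℝ) (ℓ : ℕ) : ℝ :=
  (∑ i ∈ Finset.Icc 1 ℓ, σ i * m i) / σ (ℓ + 1)

lemma sigma_anti (K : ℕ) (σ : ℕ → ℝ)
    (hσpos : ∀ ℓ, 1 ≤ ℓ → ℓ ≤ K → 0 < σ ℓ)
    (hfall : ∀ ℓ, 1 ≤ ℓ → ℓ < K → 64 * σ (ℓ + 1) ≤ σ ℓ) :
    ∀ b a, 1 ≤ a → a ≤ b → b ≤ K → σ b ≤ σ a := by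
  intro b
  induction b with
  | zero => intro a h1 hab _; omega
  | succ nn ih =>
    intro a h1 hab hbK
    rcases eq_or_lt_of_le hab with h | h
    · rw [h]
    · have han : a ≤ nn := by omega
      have h1n : 1 ≤ nn := by omega
      have hfn := hfall nn h1n (by omega)
      have hpos := hσpos (nn + 1) (by omega) hbK
      have h2 : σ (nn + 1) ≤ σ nn := by linarith
      exact le_trans h2 (ih a h1 han (by omega))

/-- Dual-feasibility inequality in the first regime of the single-job analysis. -/
theorem stmt_11 (K : ℕ) (hK : 1 ≤ K) (σ m : ℕ → ℝ)
    (hσpos : ∀ ℓ, 1 ≤ ℓ → ℓ ≤ K → 0 < σ ℓ)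
    (hmpos : ∀ ℓ, 1 ≤ ℓ → ℓ ≤ K → 0 < m ℓ)
    (hfall : ∀ ℓ, 1 ≤ ℓ → ℓ < K → 64 * σ (ℓ + 1) ≤ σ ℓ)
    (hcap : ∀ ℓ, 1 ≤ ℓ → ℓ ≤ K →
      2 * (∑ i ∈ Finset.Icc 1 (ℓ - 1), m i * σ i) ≤ m ℓ * σ ℓ)
    (γ : ℝ) (hγ : 2 * (K : ℝ) ≤ γ)
    (ℓ ℓs : ℕ) (hℓ1 : 1 ≤ ℓ) (hℓK : ℓ ≤ K) (hℓs1 : 1 ≤ ℓs) (hℓsK : ℓs < K)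
    (n L : ℝ) (hn : 0 < n) (hLpos : 0 < L)
    (hcase : (ℓ ≤ ℓs ∧ γ * (m ℓs * σ ℓs) ≤ L * n) ∨
             (ℓs < ℓ ∧ γ * (∑ i ∈ Finset.Icc 1 ℓs, m i * σ i) ≤ L * n)) :
    1 / n ≤ (L / σ ℓ) * (1 / (2 * K * m ℓ) + 1 / (2 * K * tmDef σ m ℓs)) := by
  have hK1 : (1 : ℝ) ≤ K := by exact_mod_cast hK
  have hσℓ : 0 < σ ℓ := hσpos ℓ hℓ1 hℓK
  have hmℓ : 0 < m ℓ := hmpos ℓ hℓ1 hℓK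
  have hσs1 : 0 < σ (ℓs + 1) := hσpos _ (by omega) (by omega)
  set S : ℝ := ∑ i ∈ Finset.Icc 1 ℓs, σ i * m i with hS
  have hSpos : 0 < S := by
    apply Finset.sum_pos
    · intro i hi
      rw [Finset.mem_Icc] at hi
      exact mul_pos (hσpos i hi.1 (by omega)) (hmpos i hi.1 (by omega))
    · exact ⟨1, by rw [Finset.mem_Icc]; omega⟩
  have htm : tmDef σ m ℓs = S / σ (ℓs + 1) := rfl
  have htmpos : 0 < tmDef σ m ℓs := by rw [htm]; exact div_pos hSpos hσs1
  have hSS : (∑ i ∈ Finset.Icc 1 ℓs, m i * σ i) = S :=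
    Finset.sum_congr rfl (fun i _ => mul_comm _ _)
  rw [mul_add]
  rcases hcase with ⟨hle, hLn⟩ | ⟨hlt, hLn⟩
  · -- case ℓ ≤ ℓs
    have hmσle : m ℓ * σ ℓ ≤ m ℓs * σ ℓs := by
      rcases eq_or_lt_of_le hle with h | h
      · rw [h]
      · have hmem : ℓ ∈ Finset.Icc 1 (ℓs - 1) := by rw [Finset.mem_Icc]; omega
        have hsum : m ℓ * σ ℓ ≤ ∑ i ∈ Finset.Icc 1 (ℓs - 1), m i * σ i := by
          apply Finset.single_le_sum (f := fun i => m i * σ i) _ hmem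
          intro i hi
          rw [Finset.mem_Icc] at hi
          exact (mul_pos (hmpos i hi.1 (by omega)) (hσpos i hi.1 (by omega))).le
        have hc := hcap ℓs hℓs1 (le_of_lt hℓsK)
        have hp : 0 < m ℓ * σ ℓ := mul_pos hmℓ hσℓ
        linarith
    have hmsp : 0 < m ℓs * σ ℓs :=
      mul_pos (hmpos ℓs hℓs1 hℓsK.le) (hσpos ℓs hℓs1 hℓsK.le)
    have key : σ ℓ * (2 * K * m ℓ) ≤ L * n := by
      nlinarith [mul_nonneg (sub_nonneg.2 hγ) hmsp.le]
    have h1 : 1 / n ≤ L / σ ℓ * (1 / (2 * K * m ℓ)) := by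
      rw [div_mul_div_comm, mul_one, div_le_div_iff₀ hn (by positivity)]
      linarith
    have h2 : 0 ≤ L / σ ℓ * (1 / (2 * K * tmDef σ m ℓs)) := by positivity
    linarith
  · -- case ℓs < ℓ
    rw [hSS] at hLn
    have hσle : σ ℓ ≤ σ (ℓs + 1) :=
      sigma_anti K σ hσpos hfall ℓ (ℓs + 1) (by omega) (by omega) hℓK
    have htmle : σ ℓ * tmDef σ m ℓs ≤ S := by
      rw [htm, ← mul_div_assoc, div_le_iff₀ hσs1]
      nlinarith
    have key : σ ℓ * (2 * K * tmDef σ m ℓs) ≤ L * n := by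
      nlinarith [mul_nonneg (sub_nonneg.2 hγ) hSpos.le]
    have h1 : 1 / n ≤ L / σ ℓ * (1 / (2 * K * tmDef σ m ℓs)) := by
      rw [div_mul_div_comm, mul_one, div_le_div_iff₀ hn (by positivity)]
      linarith
    have h2 : 0 ≤ L / σ ℓ * (1 / (2 * K * m ℓ)) := by positivity
    linarith
end

section
/- Under the increasing capacity assumption, let γ ≥ 2K, and let ℓ with 1 ≤ ℓ ≤ K and ℓ* with 1 ≤ ℓ* < K be speed classes. Then 1/~m_{ℓ*} ≤ (γ·σ_{ℓ*+1}/σ_ℓ)·(1/(2K·m_ℓ) + 1/(2K·~m_{ℓ*})). -/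
/-- Dual-feasibility inequality in the second regime of the single-job analysis. -/
theorem stmt_12 (K : ℕ) (hK : 1 ≤ K) (σ m : ℕ → ℝ)
    (hσpos : ∀ ℓ, 1 ≤ ℓ → ℓ ≤ K → 0 < σ ℓ)
    (hmpos : ∀ ℓ, 1 ≤ ℓ → ℓ ≤ K → 0 < m ℓ)
    (hfall : ∀ ℓ, 1 ≤ ℓ → ℓ < K → 64 * σ (ℓ + 1) ≤ σ ℓ)
    (hcap : ∀ ℓ, 1 ≤ ℓ → ℓ ≤ K →
      2 * (∑ i ∈ Finset.Icc 1 (ℓ - 1), m i * σ i) ≤ m ℓ * σ ℓ)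
    (γ : ℝ) (hγ : 2 * (K : ℝ) ≤ γ)
    (ℓ ℓs : ℕ) (hℓ1 : 1 ≤ ℓ) (hℓK : ℓ ≤ K) (hℓs1 : 1 ≤ ℓs) (hℓsK : ℓs < K) :
    1 / tmDef σ m ℓs ≤
      (γ * σ (ℓs + 1) / σ ℓ) * (1 / (2 * K * m ℓ) + 1 / (2 * K * tmDef σ m ℓs)) := by
  have hs1 : 0 < σ (ℓs + 1) := hσpos _ (by omega) (by omega)
  have hσℓ : 0 < σ ℓ := hσpos ℓ hℓ1 hℓK
  have hmℓ : 0 < m ℓ := hmpos ℓ hℓ1 hℓK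
  set S := ∑ i ∈ Finset.Icc 1 ℓs, σ i * m i with hSdef
  have hS : 0 < S := by
    apply Finset.sum_pos
    · intro i hi
      simp only [Finset.mem_Icc] at hi
      exact mul_pos (hσpos i hi.1 (by omega)) (hmpos i hi.1 (by omega))
    · exact ⟨1, Finset.mem_Icc.mpr ⟨le_refl 1, hℓs1⟩⟩
  -- decreasing speeds
  have hdec : ∀ a b : ℕ, 1 ≤ a → a ≤ b → b ≤ K → σ b ≤ σ a := by
    intro a b ha hab hbK
    induction b with
    | zero => omega
    | succ n ih =>
      rcases Nat.lt_or_ge a (n + 1) with h | h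
      · have hn : σ n ≤ σ a := ih (by omega) (by omega)
        have h1 : 0 < σ (n + 1) := hσpos _ (by omega) hbK
        have := hfall n (by omega) (by omega)
        nlinarith
      · have : a = n + 1 := by omega
        rw [this]
  have key : σ ℓ * m ℓ ≤ S + σ (ℓs + 1) * m ℓ := by
    rcases Nat.lt_or_ge ℓs ℓ with h | h
    · -- ℓ ≥ ℓs + 1, so σ ℓ ≤ σ (ℓs+1)
      have hle : σ ℓ ≤ σ (ℓs + 1) := hdec (ℓs + 1) ℓ (by omega) (by omega) hℓK
      nlinarith
    · -- ℓ ≤ ℓs, so σ ℓ * m ℓ is a summand of S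
      have hmem : ℓ ∈ Finset.Icc 1 ℓs := Finset.mem_Icc.mpr ⟨hℓ1, h⟩
      have : σ ℓ * m ℓ ≤ S := by
        apply Finset.single_le_sum (f := fun i => σ i * m i) _ hmem
        intro i hi
        simp only [Finset.mem_Icc] at hi
        exact (mul_pos (hσpos i hi.1 (by omega)) (hmpos i hi.1 (by omega))).le
      nlinarith [mul_pos hs1 hmℓ]
  have hKpos : (0:ℝ) < K := by exact_mod_cast Nat.pos_of_ne_zero (by omega)
  have hγpos : 0 < γ := lt_of_lt_of_le (by linarith) hγ
  simp only [tmDef, ← hSdef, one_div_div]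
  rw [div_le_iff₀ hS]
  have hmain : 2 * (K:ℝ) * (σ ℓ * m ℓ) * σ (ℓs + 1) ≤ γ * (S + σ (ℓs + 1) * m ℓ) * σ (ℓs + 1) := by
    have h1 : 2 * (K:ℝ) * (σ ℓ * m ℓ) ≤ γ * (S + σ (ℓs + 1) * m ℓ) :=
      mul_le_mul hγ key (by positivity) hγpos.le
    nlinarith
  have hexp : γ * σ (ℓs + 1) / σ ℓ *
      (1 / (2 * K * m ℓ) + 1 / (2 * (K:ℝ) * (S / σ (ℓs + 1)))) * S =
      γ * σ (ℓs + 1) * (S + σ (ℓs + 1) * m ℓ) / (σ ℓ * (2 * K * m ℓ)) := by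
    field_simp
  rw [hexp, le_div_iff₀ (by positivity)]
  nlinarith [mul_pos hσℓ hmℓ]
end
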